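/- Let q be a prime power and let b be a positive integer with q > b. Let H_Y be the Hilbert function of the set Y of F_q-rational points of P(1,1,b). Write d = d₀b + r₀ with 0 ≤ r₀ < b, and when d > q also write d = q + kb + r with k, r ∈ ℕ and 0 ≤ r < b. Set κ = q − r₀ if 0 < r₀ < b and κ = q + 1 if r₀ = 0. Then: H_Y(d) = d + 1 if 0 ≤ d ≤ b−1; H_Y(d) = (d₀+1)(d+1) − b·d₀(d₀+1)/2 if b ≤ d ≤ q; H_Y(d) = (k+1)(q+1) + (d₀−k)(d+1) − b·(d₀(d₀+1) − k(k+1))/2 if q+1 ≤ d ≤ qb; H_Y(d) = b(k+q)(k−q+1)/2 + q(k+d+1) − dk − bd₀ + κ if d > qb and k < q; and H_Y(d) = q² + r₀ + κ if d > qb and k ≥ q. -/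

import Mathlib

open MvPolynomial Finset

set_option synthInstance.maxHeartbeats 1000000
set_option maxHeartbeats 1000000

noncomputable section

variable (F : Type) [Field F] [Fintype F]

/-- The submodule of polynomials vanishing at every nonzero point of `F³`. -/
def vanishing : Submodule F (MvPolynomial (Fin 3) F) where
  carrier := {f | ∀ y : Fin 3 → F, y ≠ 0 → eval y f = 0}
  add_mem' := fun hf hg y hy => by simp [hf y hy, hg y hy]
  zero_mem' := fun y hy => by simp
  smul_mem' := fun c f hf y hy => by simp [MvPolynomial.smul_eval, hf y hy]

/-- `S_d`: the degree-`d` weighted-homogeneous piece (weights `1, 1, b`). -/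
def Sd (b d : ℕ) : Submodule F (MvPolynomial (Fin 3) F) :=
  weightedHomogeneousSubmodule F ![1, 1, b] d

/-- `I_d`: the degree-`d` piece of the vanishing ideal of `ℙ(1,1,b)(F_q)`. -/
def Id' (b d : ℕ) : Submodule F (MvPolynomial (Fin 3) F) := Sd F b d ⊓ vanishing F

/-- The Hilbert function `H_Y(d) = dim S_d − dim I_d` of `Y = ℙ(1,1,b)(F_q)`. -/
def HY (b d : ℕ) : ℕ :=
  Module.finrank F ↥(Sd F b d) - Module.finrank F ↥(Id' F b d)

/-! ### auxiliary: exponent reduction -/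

def rho (q m : ℕ) : ℕ := if m = 0 then 0 else (m-1) % (q-1) + 1

lemma rho_le (q m : ℕ) (hq : 2 ≤ q) : rho q m ≤ q - 1 := by
  unfold rho; split
  · omega
  · have := Nat.mod_lt (m-1) (y := q-1) (by omega); omega

lemma rho_pos (q m : ℕ) (hm : 0 < m) : 0 < rho q m := by
  unfold rho; split <;> omega

lemma rho_le_self (q m : ℕ) : rho q m ≤ m := by
  unfold rho; split
  · omega
  · have := Nat.mod_le (m-1) (q-1); omega

lemma rho_eq_self (q m : ℕ) (hm : m ≤ q - 1) : rho q m = m := by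
  unfold rho; split
  · omega
  · rw [Nat.mod_eq_of_lt (by omega)]; omega

lemma rho_spec (q m : ℕ) (hm : 0 < m) : ∃ j, m = rho q m + (q-1) * j := by
  refine ⟨(m-1)/(q-1), ?_⟩
  have h1 := Nat.div_add_mod (m-1) (q-1)
  unfold rho
  rw [if_neg hm.ne']
  have : (q-1) * ((m-1)/(q-1)) + (m-1) % (q-1) = m - 1 := h1
  omega

lemma rho_char (q a m : ℕ) (hq : 2 ≤ q) (ha : 0 < a) (ha' : a ≤ q - 1) :
    rho q m = a ↔ ∃ j, m = a + (q-1) * j := by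
  constructor
  · rintro rfl
    rcases Nat.eq_zero_or_pos m with h | h
    · simp [h, rho] at ha
    · exact rho_spec q m h
  · rintro ⟨j, rfl⟩
    unfold rho
    have h2 : a + (q-1)*j - 1 = (a-1) + (q-1)*j := by omega
    rw [if_neg (by omega), h2, Nat.add_mul_mod_self_left, Nat.mod_eq_of_lt (by omega)]
    omega

lemma pow_rho (t : F) (m : ℕ) : t ^ m = t ^ rho (Fintype.card F) m := by
  set q := Fintype.card F with hq2'
  have hq2 : 2 ≤ q := Fintype.one_lt_card
  rcases Nat.eq_zero_or_pos m with hm | hm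
  · simp [hm, rho]
  rcases eq_or_ne t 0 with ht | ht
  · have h1 : 0 < rho q m := rho_pos q m hm
    simp [ht, zero_pow, hm.ne', h1.ne']
  · obtain ⟨j, hj⟩ := rho_spec q m hm
    conv_lhs => rw [hj]
    rw [pow_add, pow_mul, FiniteField.pow_card_sub_one_eq_one t ht, one_pow, mul_one]

/-! ### monomial functions and linear independence -/

abbrev Vnz (F : Type) [Field F] := {y : Fin 3 → F // y ≠ 0}

def chi (a : ℕ × ℕ × ℕ) : Vnz F → F :=
  fun y => y.1 0 ^ a.1 * y.1 1 ^ a.2.1 * y.1 2 ^ a.2.2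

def Phi (a : ℕ × ℕ × ℕ) : (Fin 3 → F) → F :=
  fun y => y 0 ^ a.1 * y 1 ^ a.2.1 * y 2 ^ a.2.2

def admis (q : ℕ) : Set (ℕ × ℕ × ℕ) :=
  {a | a.1 ≤ q - 1 ∧ a.2.1 ≤ q - 1 ∧ a.2.2 ≤ q - 1 ∧ a ≠ (0,0,0)}

def exA (a : ℕ × ℕ × ℕ) : Fin 3 →₀ ℕ :=
  Finsupp.equivFunOnFinite.symm ![a.1, a.2.1, a.2.2]

lemma exA_apply (a : ℕ × ℕ × ℕ) (i : Fin 3) : exA a i = ![a.1, a.2.1, a.2.2] i := rfl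

lemma exA_inj : Function.Injective exA := by
  intro a b h
  have h0 := congrArg (fun f => (f 0, f 1, f 2)) h
  simp only [exA_apply] at h0
  simp only [Matrix.cons_val_zero, Matrix.cons_val_one, Matrix.head_cons] at h0
  rcases a with ⟨a1, a2, a3⟩; rcases b with ⟨b1, b2, b3⟩
  simpa using h0

lemma exA_eq (u : Fin 3 →₀ ℕ) : exA (u 0, u 1, u 2) = u := by
  ext i
  rw [exA_apply]
  fin_cases i <;> simp

lemma eval_exA (v : Fin 3 → F) (a : ℕ × ℕ × ℕ) :
    eval v (monomial (exA a) 1) = Phi F a v := by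
  rw [eval_monomial, one_mul, Finsupp.prod_fintype _ _ (fun i => pow_zero _)]
  rw [Fin.prod_univ_three]
  simp [exA_apply, Phi]

lemma chi_indep : LinearIndependent F (fun a : admis (Fintype.card F) => chi F a.1) := by
  classical
  set q := Fintype.card F with hq
  have hmem : ∀ a : admis q, monomial (exA a.1) 1 ∈ restrictDegree (Fin 3) F (q - 1) := by
    intro ⟨a, ha⟩
    rw [mem_restrictDegree]
    intro s hs i
    rw [support_monomial, if_neg one_ne_zero, Finset.mem_singleton] at hs
    subst hs
    rw [exA_apply]
    fin_cases i <;> simp <;> [exact ha.1; exact ha.2.1; exact ha.2.2.1]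
  set fam : admis q → MvPolynomial.R (Fin 3) F := fun a => ⟨monomial (exA a.1) 1, hmem a⟩
    with hfam
  have h1 : LinearIndependent F fam := by
    apply LinearIndependent.of_comp (restrictDegree (Fin 3) F (q - 1)).subtype
    have : ((restrictDegree (Fin 3) F (q - 1)).subtype ∘ fam)
        = (fun s => monomial s 1) ∘ (fun a : admis q => exA a.1) := rfl
    rw [this, ← coe_basisMonomials]
    exact (basisMonomials (Fin 3) F).linearIndependent.comp _
      (exA_inj.comp Subtype.val_injective)
  have h2 : LinearIndependent F ((evalᵢ (Fin 3) F) ∘ fam) :=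
    h1.map' _ (ker_evalₗ (Fin 3) F)
  have h2' : LinearIndependent F (fun a : admis q => Phi F a.1) := by
    have : ((evalᵢ (Fin 3) F) ∘ fam) = fun a : admis q => Phi F a.1 := by
      funext a
      show evalₗ F (Fin 3) (monomial (exA a.1) 1) = Phi F a.1
      funext v
      exact eval_exA F v a.1
    rwa [this] at h2
  have h3 := h2'.map (f := LinearMap.funLeft F F (Subtype.val : Vnz F → (Fin 3 → F))) ?_
  · have : (LinearMap.funLeft F F (Subtype.val : Vnz F → (Fin 3 → F)))
        ∘ (fun a : admis q => Phi F a.1) = fun a : admis q => chi F a.1 := rfl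
    rwa [this] at h3
  · rw [Submodule.disjoint_def]
    intro f hsp hker
    have hf0 : f 0 = 0 := by
      have hle : Submodule.span F (Set.range fun a : admis q => Phi F a.1)
          ≤ LinearMap.ker (LinearMap.proj (R := F) (φ := fun _ : Fin 3 → F => F) 0) := by
        rw [Submodule.span_le]
        rintro - ⟨a, rfl⟩
        simp only [SetLike.mem_coe, LinearMap.mem_ker, LinearMap.proj_apply]
        obtain ⟨⟨a1, a2, a3⟩, ha⟩ := a
        have hne : ¬(a1 = 0 ∧ a2 = 0 ∧ a3 = 0) := by
          intro ⟨u, v, w⟩; exact ha.2.2.2 (by simp [u, v, w])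
        show (0:F) ^ a1 * (0:F) ^ a2 * (0:F) ^ a3 = 0
        rcases Nat.eq_zero_or_pos a1 with h|h
        · rcases Nat.eq_zero_or_pos a2 with h'|h'
          · have h3 : 0 < a3 := by omega
            simp [zero_pow h3.ne']
          · simp [zero_pow h'.ne']
        · simp [zero_pow h.ne']
      exact hle hsp
    rw [LinearMap.mem_ker] at hker
    funext y
    rcases eq_or_ne y 0 with rfl | hy
    · exact hf0
    · exact congrFun hker ⟨y, hy⟩

/-! ### exponent finsets -/

def Efin (b d : ℕ) : Finset (ℕ × ℕ × ℕ) :=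
  ((range (d+1)) ×ˢ (range (d+1)) ×ˢ (range (d+1))).filter
    (fun m => m.1 + m.2.1 + b * m.2.2 = d)

lemma mem_Efin (b d : ℕ) (hb : 0 < b) (m : ℕ × ℕ × ℕ) :
    m ∈ Efin b d ↔ m.1 + m.2.1 + b * m.2.2 = d := by
  unfold Efin
  simp only [mem_filter, mem_product, mem_range]
  constructor
  · tauto
  · intro h
    refine ⟨⟨?_, ?_, ?_⟩, h⟩ <;> nlinarith

def RF (q b d : ℕ) : Finset (ℕ × ℕ × ℕ) :=
  (Efin b d).image (fun m => (rho q m.1, rho q m.2.1, rho q m.2.2))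

lemma weight_u (b : ℕ) (u : Fin 3 →₀ ℕ) :
    (Finsupp.weight ![1,1,b]) u = u 0 + u 1 + u 2 * b := by
  rw [Finsupp.weight_apply, Finsupp.sum_fintype _ _ (by intro i; simp), Fin.sum_univ_three]
  simp [smul_eq_mul]

lemma Sd_eq_span (b d : ℕ) (hb : 0 < b) :
    Sd F b d = Submodule.span F ((fun m => monomial (exA m) (1:F)) '' ↑(Efin b d)) := by
  apply le_antisymm
  · intro f hf
    rw [Sd, mem_weightedHomogeneousSubmodule] at hf
    rw [f.as_sum]
    apply Submodule.sum_mem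
    intro v hv
    have hw : (Finsupp.weight ![1,1,b]) v = d := hf (mem_support_iff.mp hv)
    rw [weight_u] at hw
    have hmem : (v 0, v 1, v 2) ∈ Efin b d := by
      rw [mem_Efin b d hb]
      show v 0 + v 1 + b * v 2 = d
      rw [mul_comm b]
      exact hw
    have h2 : monomial v (coeff v f) = (coeff v f) • monomial v (1:F) := by
      rw [smul_monomial, smul_eq_mul, mul_one]
    rw [h2]
    exact Submodule.smul_mem _ _
      (Submodule.subset_span ⟨(v 0, v 1, v 2), hmem, by
        show monomial (exA (v 0, v 1, v 2)) (1:F) = monomial v 1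
        rw [exA_eq]⟩)
  · rw [Submodule.span_le]
    rintro - ⟨m, hm, rfl⟩
    rw [SetLike.mem_coe, Sd, mem_weightedHomogeneousSubmodule]
    apply isWeightedHomogeneous_monomial
    rw [weight_u]
    rw [Finset.mem_coe, mem_Efin b d hb] at hm
    show exA m 0 + exA m 1 + exA m 2 * b = d
    simp only [exA_apply]
    simp only [Matrix.cons_val_zero, Matrix.cons_val_one, Matrix.head_cons]
    rw [mul_comm]
    exact hm

lemma HY_eq_card (b d : ℕ) (hb : 0 < b) :
    HY F b d = (RF (Fintype.card F) b d).card := by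
  classical
  set q := Fintype.card F with hq
  have hq2 : 2 ≤ q := Fintype.one_lt_card
  set evMap : MvPolynomial (Fin 3) F →ₗ[F] (Vnz F → F) :=
    (LinearMap.funLeft F F Subtype.val).comp (evalₗ F (Fin 3)) with hevMap
  set L := evMap.comp (Sd F b d).subtype with hL
  haveI : FiniteDimensional F (Sd F b d) := by
    rw [Sd_eq_span F b d hb]
    exact FiniteDimensional.span_of_finite F ((Efin b d).finite_toSet.image _)
  have hker : LinearMap.ker L = Submodule.comap (Sd F b d).subtype (vanishing F) := by
    ext f
    simp only [LinearMap.mem_ker, Submodule.mem_comap, hL, LinearMap.comp_apply]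
    constructor
    · intro h y hy
      exact congrFun h ⟨y, hy⟩
    · intro h
      funext y
      exact h y.1 y.2
  have hkerrank : Module.finrank F (LinearMap.ker L) = Module.finrank F (Id' F b d) := by
    rw [hker]
    have e2 : Submodule.map (Sd F b d).subtype
        (Submodule.comap (Sd F b d).subtype (vanishing F)) = Id' F b d := by
      rw [Submodule.map_comap_subtype]; rfl
    exact ((Submodule.equivMapOfInjective (Sd F b d).subtype (Submodule.injective_subtype _)
      (Submodule.comap (Sd F b d).subtype (vanishing F))).trans
      (LinearEquiv.ofEq _ _ e2)).finrank_eq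
  have hrank := LinearMap.finrank_range_add_finrank_ker L
  have hrange : LinearMap.range L = Submodule.span F ((chi F) '' ↑(RF q b d)) := by
    rw [hL, LinearMap.range_comp, Submodule.range_subtype, Sd_eq_span F b d hb,
        Submodule.map_span]
    congr 1
    rw [Set.image_image, RF, Finset.coe_image, Set.image_image]
    apply Set.image_congr
    intro m _
    funext y
    show eval y.1 (monomial (exA m) 1) = chi F _ y
    rw [eval_exA]
    show y.1 0 ^ m.1 * y.1 1 ^ m.2.1 * y.1 2 ^ m.2.2 = _
    rw [pow_rho F (y.1 0), pow_rho F (y.1 1), pow_rho F (y.1 2)]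
    rfl
  have hspanrank : Module.finrank F (LinearMap.range L) = (RF q b d).card := by
    rw [hrange]
    rcases Nat.eq_zero_or_pos d with rfl | hd
    · have hE : Efin b 0 = {(0,0,0)} := by
        ext m
        rw [mem_Efin b 0 hb, Finset.mem_singleton]
        constructor
        · intro h
          have h1 : m.1 = 0 ∧ m.2.1 = 0 ∧ b * m.2.2 = 0 := by omega
          have h2 : m.2.2 = 0 := by
            rcases Nat.mul_eq_zero.mp h1.2.2 with h | h
            · omega
            · exact h
          rcases m with ⟨m1, m2, m3⟩
          simp_all
        · rintro rfl; rfl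
      have hR : RF q b 0 = {(0,0,0)} := by
        rw [RF, hE]
        rfl
      rw [hR]
      have hne : chi F ((0:ℕ),(0:ℕ),(0:ℕ)) ≠ 0 := by
        intro hcontra
        have h1 : chi F ((0:ℕ),(0:ℕ),(0:ℕ))
            ⟨fun _ => 1, by intro h0; exact one_ne_zero (congrFun h0 0)⟩ = 0 := by
          rw [hcontra]; rfl
        simp [chi] at h1
      rw [Finset.coe_singleton, Set.image_singleton, Finset.card_singleton,
        finrank_span_singleton hne]
    · -- d ≥ 1 : RF ⊆ admissible set
      have hsub : ↑(RF q b d) ⊆ admis q := by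
        intro a ha
        rw [Finset.mem_coe, RF, Finset.mem_image] at ha
        obtain ⟨m, hm, rfl⟩ := ha
        rw [mem_Efin b d hb] at hm
        refine ⟨rho_le q _ hq2, rho_le q _ hq2, rho_le q _ hq2, ?_⟩
        intro heq
        rw [Prod.ext_iff] at heq
        rw [Prod.ext_iff] at heq
        obtain ⟨e1, e2, e3⟩ := heq
        simp only at e1 e2 e3
        have hm1 : m.1 = 0 := by
          by_contra h
          exact absurd e1 (rho_pos q m.1 (Nat.pos_of_ne_zero h)).ne'
        have hm2 : m.2.1 = 0 := by
          by_contra h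
          exact absurd e2 (rho_pos q m.2.1 (Nat.pos_of_ne_zero h)).ne'
        have hm3 : m.2.2 = 0 := by
          by_contra h
          exact absurd e3 (rho_pos q m.2.2 (Nat.pos_of_ne_zero h)).ne'
        rw [hm1, hm2, hm3] at hm
        simp at hm
        omega
      have hRFind : LinearIndependent F (fun x : (↑(RF q b d) : Set (ℕ×ℕ×ℕ)) => chi F x.1) :=
        (chi_indep F).comp (Set.inclusion hsub) (Set.inclusion_injective hsub)
      have hinj : Set.InjOn (chi F) ↑(RF q b d) :=
        Set.injOn_iff_injective.mpr hRFind.injective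
      haveI : Fintype ↑(chi F '' ↑(RF q b d)) :=
        ((RF q b d).finite_toSet.image (chi F)).fintype
      rw [finrank_span_set_eq_card (LinearIndepOn.id_image (show LinearIndepOn F (chi F) (↑(RF q b d) : Set (ℕ×ℕ×ℕ)) from hRFind))]
      rw [show (chi F '' ↑(RF q b d)).toFinset = (RF q b d).image (chi F) by
        simp only [Set.toFinset_image, Finset.toFinset_coe]]
      exact Finset.card_image_of_injOn hinj
  rw [HY, ← hkerrank, ← hspanrank]
  omega

lemma rho_add_mul (q x t : ℕ) (hq : 2 ≤ q) (hx : 0 < x) :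
    rho q (x + (q-1)*t) = rho q x := by
  rw [rho_char q _ _ hq (rho_pos q x hx) (rho_le q x hq)]
  obtain ⟨j, hj⟩ := rho_spec q x hx
  refine ⟨j + t, ?_⟩
  conv_lhs => rw [hj]
  rw [Nat.mul_add]
  omega

lemma rho_cases2 (q σ : ℕ) (hq : 2 ≤ q) (h1 : 1 ≤ σ) (h2 : σ ≤ 2*(q-1)) :
    σ = rho q σ ∨ σ = rho q σ + (q-1) := by
  obtain ⟨j, hj⟩ := rho_spec q σ h1
  have hp := rho_pos q σ h1
  have hl := rho_le q σ hq
  match j, hj with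
  | 0, hj => left; omega
  | 1, hj => right; omega
  | (j+2), hj =>
    exfalso
    have : (q-1)*2 ≤ (q-1)*(j+2) := Nat.mul_le_mul_left _ (by omega)
    omega

/-- the indicator-adjusted count function -/
def gfun (q e : ℕ) : ℕ := if e = 0 then 0 else min (e+1) (q+1)

/-- pairs in [0,q-1]² with given sum -/
def sumFil (q σ : ℕ) : Finset (ℕ × ℕ) :=
  (range q ×ˢ range q).filter (fun p => p.1 + p.2 = σ)

lemma card_sumFil (q σ : ℕ) (hq : 2 ≤ q) :
    (sumFil q σ).card = min σ (q-1) + 1 - (σ - (q-1)) := by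
  have h : (sumFil q σ).card = (Finset.Icc (σ - (q-1)) (min σ (q-1))).card := by
    apply Finset.card_bij' (fun p _ => p.1) (fun a _ => (a, σ - a))
    · intro p hp
      simp only [sumFil, mem_filter, mem_product, mem_range] at hp
      rw [Finset.mem_Icc]
      omega
    · intro a ha
      rw [Finset.mem_Icc] at ha
      simp only [sumFil, mem_filter, mem_product, mem_range]
      omega
    · intro p hp
      simp only [sumFil, mem_filter, mem_product, mem_range] at hp
      have : σ - p.1 = p.2 := by omega
      rw [this]
    · intro a _
      rfl
  rw [h, Nat.card_Icc]

/-- pairs in [0,q-1]² with positive sum ≤ e congruent to e mod q-1 -/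
def PairFil (q e : ℕ) : Finset (ℕ × ℕ) :=
  (range q ×ˢ range q).filter
    (fun p => 0 < p.1 + p.2 ∧ p.1 + p.2 ≤ e ∧ (q-1) ∣ (e - (p.1 + p.2)))

lemma card_PairFil (q e : ℕ) (hq : 2 ≤ q) : (PairFil q e).card = gfun q e := by
  rcases Nat.eq_zero_or_pos e with rfl | he
  · have : PairFil q 0 = ∅ := by
      ext p
      simp only [PairFil, mem_filter, mem_product, mem_range, Finset.notMem_empty, iff_false]
      omega
    rw [this]
    rfl
  rcases le_or_gt e (q-1) with hle | hgt
  · -- 1 ≤ e ≤ q-1 : PairFil = sumFil e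
    have hPF : PairFil q e = sumFil q e := by
      ext p
      simp only [PairFil, sumFil, mem_filter, mem_product, mem_range]
      constructor
      · rintro ⟨hb, hpos, hsle, t, ht⟩
        refine ⟨hb, ?_⟩
        match t, ht with
        | 0, ht => omega
        | (t+1), ht =>
          exfalso
          have : (q-1)*1 ≤ (q-1)*(t+1) := Nat.mul_le_mul_left _ (by omega)
          omega
      · rintro ⟨hb, hs⟩
        exact ⟨hb, by omega, by omega, ⟨0, by omega⟩⟩
    rw [hPF, card_sumFil q e hq, gfun, if_neg he.ne']
    omega
  · -- e ≥ q : two sums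
    set σ1 := rho q e with hσ1
    have hp1 : 0 < σ1 := rho_pos q e he
    have hl1 : σ1 ≤ q - 1 := rho_le q e hq
    obtain ⟨j, hj⟩ := rho_spec q e he
    have hj1 : 1 ≤ j := by
      by_contra h
      push_neg at h
      interval_cases j <;> omega
    have hσe : σ1 + (q-1) ≤ e := by
      have : (q-1)*1 ≤ (q-1)*j := Nat.mul_le_mul_left _ hj1
      omega
    have hPF : PairFil q e = sumFil q σ1 ∪ sumFil q (σ1 + (q-1)) := by
      ext p
      simp only [PairFil, sumFil, Finset.mem_union, mem_filter, mem_product, mem_range]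
      constructor
      · rintro ⟨hb, hpos, hsle, t, ht⟩
        have hEq : e = (p.1 + p.2) + (q-1)*t := by omega
        have hrr : rho q (p.1 + p.2) = σ1 := by
          rw [hσ1, hEq, rho_add_mul q _ t hq hpos]
        have h2 : p.1 + p.2 ≤ 2*(q-1) := by omega
        rcases rho_cases2 q (p.1+p.2) hq hpos h2 with h | h <;> rw [hrr] at h
        · left; exact ⟨hb, h⟩
        · right; exact ⟨hb, h⟩
      · rintro (⟨hb, hs⟩ | ⟨hb, hs⟩)
        · refine ⟨hb, by omega, by omega, ⟨j, by omega⟩⟩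
        · refine ⟨hb, by omega, by omega, ⟨j-1, ?_⟩⟩
          match j, hj with
          | (j+1), hj =>
            rw [Nat.mul_succ] at hj
            simp only [Nat.add_sub_cancel]
            omega
    have hdisj : Disjoint (sumFil q σ1) (sumFil q (σ1 + (q-1))) := by
      rw [Finset.disjoint_left]
      intro p h1 h2
      simp only [sumFil, mem_filter, mem_product, mem_range] at h1 h2
      omega
    rw [hPF, Finset.card_union_of_disjoint hdisj, card_sumFil q _ hq, card_sumFil q _ hq,
      gfun, if_neg he.ne']
    have : min (e+1) (q+1) = q+1 := by omega
    omega


def Afin (q b d : ℕ) : Finset (ℕ × ℕ × ℕ) :=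
  (range q ×ˢ range q ×ˢ range q).filter
    (fun a => 0 < a.1 + a.2.1 ∧ a.1 + a.2.1 + b*a.2.2 ≤ d ∧
      (q-1) ∣ (d - (a.1 + a.2.1 + b*a.2.2)))

def Bfin (q b d : ℕ) : Finset (ℕ × ℕ × ℕ) :=
  (range q ×ˢ range q ×ˢ range q).filter
    (fun a => a.1 = 0 ∧ a.2.1 = 0 ∧ 0 < a.2.2 ∧ b*a.2.2 ≤ d ∧
      b*(q-1) ∣ (d - b*a.2.2))

lemma card_Afin (q b d : ℕ) (hq2 : 2 ≤ q) :
    (Afin q b d).card = ∑ j ∈ range q, gfun q (d - b*j) := by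
  rw [Finset.card_eq_sum_card_fiberwise (f := fun a => a.2.2) (t := range q)
    (by intro a ha; simp only [Finset.mem_coe, Afin, mem_filter, mem_product, mem_range] at ha
        simp only [Finset.mem_coe, mem_range]; exact ha.1.2.2)]
  apply Finset.sum_congr rfl
  intro j hj
  rw [← card_PairFil q (d - b*j) hq2]
  refine Finset.card_bij' (fun a _ => (a.1, a.2.1)) (fun p _ => (p.1, p.2, j))
    ?_hi ?_hj ?_li ?_ri
  case _hi =>
    intro a ha
    simp only [Afin, mem_filter, mem_product, mem_range] at ha
    obtain ⟨⟨⟨h1, h2, h3⟩, hpos, hle, t, ht⟩, hfib⟩ := ha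
    subst hfib
    simp only [PairFil, mem_filter, mem_product, mem_range]
    exact ⟨⟨h1, h2⟩, hpos, by omega, ⟨t, by omega⟩⟩
  case _hj =>
    intro p hp
    simp only [PairFil, mem_filter, mem_product, mem_range] at hp
    obtain ⟨⟨h1, h2⟩, hpos, hle, t, ht⟩ := hp
    simp only [Afin, mem_filter, mem_product, mem_range]
    have hbj : b*j ≤ d := by omega
    exact ⟨⟨⟨h1, h2, mem_range.mp hj⟩, hpos, by omega, ⟨t, by omega⟩⟩, trivial⟩
  case _li =>
    intro a ha
    simp only [mem_filter] at ha
    obtain ⟨-, hfib⟩ := ha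
    show (a.1, a.2.1, j) = a
    rw [← hfib]
  case _ri =>
    intro p _
    rfl

lemma card_Bfin (q b d : ℕ) (hq2 : 2 ≤ q) (hb : 0 < b) (hbq : b < q) (hd : 1 ≤ d) :
    (Bfin q b d).card = if b ∣ d then 1 else 0 := by
  rcases em (b ∣ d) with hdvd | hdvd
  · obtain ⟨c, rfl⟩ := hdvd
    have hc : 1 ≤ c := by
      rcases Nat.eq_zero_or_pos c with rfl | h
      · simp at hd
      · exact h
    rw [if_pos ⟨c, rfl⟩]
    have hB : Bfin q b (b*c) = {(0, 0, rho q c)} := by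
      ext ⟨a1, a2, a3⟩
      simp only [Bfin, mem_filter, mem_product, mem_range, Finset.mem_singleton,
        Prod.mk.injEq]
      constructor
      · rintro ⟨⟨h1, h2, h3⟩, e1, e2, hpos, hle, t, ht⟩
        refine ⟨e1, e2, ?_⟩
        have ha3c : a3 ≤ c := Nat.le_of_mul_le_mul_left (by omega) hb
        have hbc : b*c = b*a3 + b*(q-1)*t := by omega
        have hexp : b*(a3 + (q-1)*t) = b*a3 + b*(q-1)*t := by ring
        have hceq : c = a3 + (q-1)*t := Nat.eq_of_mul_eq_mul_left hb (by omega)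
        rw [hceq, rho_add_mul q a3 t hq2 hpos, rho_eq_self q a3 (by omega)]
      · rintro ⟨rfl, rfl, rfl⟩
        have hpos : 0 < rho q c := rho_pos q c hc
        have hle1 : rho q c ≤ q - 1 := rho_le q c hq2
        have hlc : rho q c ≤ c := rho_le_self q c
        obtain ⟨t, htc⟩ := rho_spec q c hc
        have hmul := Nat.mul_le_mul_left b hlc
        have hexp : b*c = b*(rho q c) + b*(q-1)*t := by nth_rewrite 1 [htc]; ring
        exact ⟨⟨by omega, by omega, by omega⟩, rfl, rfl, hpos, hmul, ⟨t, by omega⟩⟩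
    rw [hB, Finset.card_singleton]
  · rw [if_neg hdvd]
    rw [Finset.card_eq_zero]
    ext ⟨a1, a2, a3⟩
    simp only [Bfin, mem_filter, mem_product, mem_range, Finset.notMem_empty, iff_false]
    rintro ⟨-, -, -, hpos, hle, t, ht⟩
    have hexp : b*(a3 + (q-1)*t) = b*a3 + b*(q-1)*t := by ring
    exact hdvd ⟨a3 + (q-1)*t, by omega⟩

lemma RF_eq_union (q b d : ℕ) (hq2 : 2 ≤ q) (hb : 0 < b) (hd : 1 ≤ d) :
    RF q b d = Afin q b d ∪ Bfin q b d := by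
  ext ⟨a1, a2, a3⟩
  simp only [RF, Finset.mem_image, Finset.mem_union]
  constructor
  · rintro ⟨⟨m1, m2, m3⟩, hm, heq⟩
    rw [mem_Efin b d hb] at hm
    simp only at hm
    simp only [Prod.mk.injEq] at heq
    obtain ⟨e1, e2, e3⟩ := heq
    have hj1 : ∃ j, m1 = a1 + (q-1)*j := by
      rcases Nat.eq_zero_or_pos m1 with rfl | h
      · exact ⟨0, by simp [← e1, rho]⟩
      · rw [← e1]; exact rho_spec q m1 h
    have hj2 : ∃ j, m2 = a2 + (q-1)*j := by
      rcases Nat.eq_zero_or_pos m2 with rfl | h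
      · exact ⟨0, by simp [← e2, rho]⟩
      · rw [← e2]; exact rho_spec q m2 h
    have hj3 : ∃ j, m3 = a3 + (q-1)*j := by
      rcases Nat.eq_zero_or_pos m3 with rfl | h
      · exact ⟨0, by simp [← e3, rho]⟩
      · rw [← e3]; exact rho_spec q m3 h
    obtain ⟨j1, hm1⟩ := hj1
    obtain ⟨j2, hm2⟩ := hj2
    obtain ⟨j3, hm3⟩ := hj3
    have hb1 : a1 ≤ q - 1 := by rw [← e1]; exact rho_le q m1 hq2
    have hb2 : a2 ≤ q - 1 := by rw [← e2]; exact rho_le q m2 hq2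
    have hb3 : a3 ≤ q - 1 := by rw [← e3]; exact rho_le q m3 hq2
    have hmul3 : b*a3 ≤ b*m3 := Nat.mul_le_mul_left b (by omega)
    rcases Nat.eq_zero_or_pos (m1 + m2) with hz | hpos
    · -- B case
      have hm30 : 0 < m3 := by
        rcases Nat.eq_zero_or_pos m3 with rfl | h
        · exfalso
          have : b * 0 = 0 := by ring
          omega
        · exact h
      have ha3 : 0 < a3 := by rw [← e3]; exact rho_pos q m3 hm30
      right
      simp only [Bfin, mem_filter, mem_product, mem_range]
      have key : d = b*a3 + b*(q-1)*j3 := by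
        rw [← hm, hm3]
        have : b*(a3 + (q-1)*j3) = b*a3 + b*(q-1)*j3 := by ring
        omega
      exact ⟨⟨by omega, by omega, by omega⟩, by omega, by omega, ha3, by omega,
        ⟨j3, by omega⟩⟩
    · -- A case
      have hapos : 0 < a1 + a2 := by
        rcases Nat.eq_zero_or_pos m1 with rfl | h
        · have h2 : 0 < m2 := by omega
          have := rho_pos q m2 h2
          omega
        · have := rho_pos q m1 h
          omega
      left
      simp only [Afin, mem_filter, mem_product, mem_range]
      have key : d = (a1 + a2 + b*a3) + (q-1)*(j1 + j2 + b*j3) := by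
        rw [← hm, hm1, hm2, hm3]
        ring
      exact ⟨⟨by omega, by omega, by omega⟩, hapos, by omega, ⟨j1 + j2 + b*j3, by omega⟩⟩
  · rintro (ha | ha)
    · simp only [Afin, mem_filter, mem_product, mem_range] at ha
      obtain ⟨⟨h1, h2, h3⟩, hpos, hle, t, ht⟩ := ha
      have key : d = (a1 + a2 + b*a3) + (q-1)*t := by omega
      rcases Nat.eq_zero_or_pos a1 with rfl | ha1
      · -- a2 > 0, lift a2
        have ha2 : 0 < a2 := by omega
        refine ⟨(0, a2 + (q-1)*t, a3), ?_, ?_⟩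
        · rw [mem_Efin b d hb]
          simp only
          omega
        · simp only [Prod.mk.injEq]
          refine ⟨by simp [rho], ?_, rho_eq_self q a3 (by omega)⟩
          rw [rho_add_mul q a2 t hq2 ha2]
          exact rho_eq_self q a2 (by omega)
      · refine ⟨(a1 + (q-1)*t, a2, a3), ?_, ?_⟩
        · rw [mem_Efin b d hb]
          simp only
          omega
        · simp only [Prod.mk.injEq]
          refine ⟨?_, rho_eq_self q a2 (by omega), rho_eq_self q a3 (by omega)⟩
          rw [rho_add_mul q a1 t hq2 ha1]
          exact rho_eq_self q a1 (by omega)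
    · simp only [Bfin, mem_filter, mem_product, mem_range] at ha
      obtain ⟨⟨h1, h2, h3⟩, e1, e2, hpos, hle, t, ht⟩ := ha
      subst e1; subst e2
      have hexp : b*(a3 + (q-1)*t) = b*a3 + b*(q-1)*t := by ring
      refine ⟨(0, 0, a3 + (q-1)*t), ?_, ?_⟩
      · rw [mem_Efin b d hb]
        simp only
        omega
      · simp only [Prod.mk.injEq]
        refine ⟨by simp [rho], by simp [rho], ?_⟩
        rw [rho_add_mul q a3 t hq2 hpos]
        exact rho_eq_self q a3 (by omega)

lemma card_RF_eq (q b d : ℕ) (hq2 : 2 ≤ q) (hb : 0 < b) (hbq : b < q) (hd : 1 ≤ d) :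
    (RF q b d).card = (if b ∣ d then 1 else 0) + ∑ j ∈ range q, gfun q (d - b*j) := by
  have hdisj : Disjoint (Afin q b d) (Bfin q b d) := by
    rw [Finset.disjoint_left]
    intro a hA hB
    simp only [Afin, mem_filter, mem_product, mem_range] at hA
    simp only [Bfin, mem_filter, mem_product, mem_range] at hB
    omega
  rw [RF_eq_union q b d hq2 hb hd, Finset.card_union_of_disjoint hdisj,
    card_Afin q b d hq2, card_Bfin q b d hq2 hb hbq hd, Nat.add_comm]

def Hcount (q b d : ℕ) : ℕ :=
  (if b ∣ d then 1 else 0) + ∑ j ∈ range q, gfun q (d - b*j)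

lemma gfun_zero (q : ℕ) : gfun q 0 = 0 := rfl

lemma gfun_big (q e : ℕ) (he : q ≤ e) (hq : 1 ≤ q) : gfun q e = q + 1 := by
  unfold gfun
  rw [if_neg (by omega)]
  omega

lemma gfun_small (q e : ℕ) (h1 : 1 ≤ e) (h2 : e ≤ q) (hq : 1 ≤ q) :
    gfun q e = e + 1 := by
  unfold gfun
  rw [if_neg (by omega)]
  omega

lemma sum_trapezoid (c bz : ℤ) (n : ℕ) :
    2 * ∑ j ∈ range n, (c - bz*(j:ℤ)) = 2*c*(n:ℤ) - bz*((n:ℤ)*((n:ℤ)-1)) := by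
  induction n with
  | zero => simp
  | succ n ih =>
    rw [Finset.sum_range_succ]
    push_cast
    linear_combination ih

lemma dvd_iff_r0 (b d d₀ r₀ : ℕ) (hb : 0 < b) (hd : d = d₀*b + r₀) (hr : r₀ < b) :
    b ∣ d ↔ r₀ = 0 := by
  constructor
  · intro hdvd
    have h1 : b ∣ d₀ * b := ⟨d₀, Nat.mul_comm _ _⟩
    have h2 : b ∣ r₀ := by
      have := Nat.dvd_sub hdvd h1
      rwa [hd, Nat.add_sub_cancel_left] at this
    obtain ⟨c, hc⟩ := h2
    rcases c with _ | c
    · omega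
    · rw [Nat.mul_succ] at hc; omega
  · intro h0
    exact ⟨d₀, by rw [hd, h0, Nat.add_zero, Nat.mul_comm]⟩

lemma hc1 (q b d : ℕ) (hq2 : 2 ≤ q) (hbq : b < q) (h1 : 1 ≤ d) (h2 : d ≤ b - 1) :
    (Hcount q b d : ℤ) = (d:ℤ) + 1 := by
  have hb : 0 < b := by omega
  have hsum : ∑ j ∈ range q, gfun q (d - b*j) = d + 1 := by
    rw [Finset.sum_eq_single_of_mem 0 (mem_range.mpr (by omega))]
    · rw [Nat.mul_zero, Nat.sub_zero]
      exact gfun_small q d h1 (by omega) (by omega)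
    · intro j _ hj
      have : b*1 ≤ b*j := Nat.mul_le_mul_left b (by omega)
      have : d - b*j = 0 := by omega
      rw [this, gfun_zero]
  have hnd : ¬ b ∣ d := by
    intro hdvd
    have := Nat.le_of_dvd (by omega) hdvd
    omega
  rw [Hcount, if_neg hnd, hsum]
  push_cast
  ring

lemma hc2 (q b d d₀ r₀ : ℕ) (hq2 : 2 ≤ q) (hb : 0 < b) (hbq : b < q)
    (hd : d = d₀*b + r₀) (hr : r₀ < b) (h1 : b ≤ d) (h2 : d ≤ q) :
    (Hcount q b d : ℤ) = ((d₀:ℤ)+1)*((d:ℤ)+1) - (b:ℤ)*(((d₀:ℤ)*((d₀:ℤ)+1))/2) := by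
  have hd' : d = b*d₀ + r₀ := by rw [hd, Nat.mul_comm]
  have hd₀1 : 1 ≤ d₀ := by
    rcases Nat.eq_zero_or_pos d₀ with h | h
    · rw [h] at hd; omega
    · exact h
  have key : (Hcount q b d : ℤ) = ∑ j ∈ range (d₀+1), ((d:ℤ) + 1 - (b:ℤ)*(j:ℤ)) := by
    have keyN : Hcount q b d = ∑ j ∈ range (d₀+1), (d - b*j + 1) := by
      have hsplit : ∑ j ∈ range q, gfun q (d - b*j)
          = ∑ j ∈ range (d₀+1), gfun q (d - b*j) + ∑ j ∈ Ico (d₀+1) q, gfun q (d - b*j) := by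
        rcases le_or_gt (d₀ + 1) q with hA | hB
        · exact (Finset.sum_range_add_sum_Ico _ hA).symm
        · -- d₀ ≥ q : forces b = 1, d = q = d₀
          have hb1 : b = 1 := by
            by_contra hbne
            have hb2 : 2 ≤ b := by omega
            have : q * 2 ≤ d₀ * b := Nat.mul_le_mul (by omega) hb2
            omega
          have hbd : b*d₀ = d₀ := by rw [hb1]; ring
          have hd₀q : d₀ = q := by omega
          have hIe : Ico (d₀+1) q = ∅ := by
            rw [Finset.Ico_eq_empty_iff]
            omega
          rw [hIe, Finset.sum_empty, hd₀q, Finset.sum_range_succ]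
          have hlast0 : d - b*q = 0 := by
            have : b*q = q := by rw [hb1]; ring
            omega
          rw [hlast0, gfun_zero]
          omega
      have hzero : ∑ j ∈ Ico (d₀+1) q, gfun q (d - b*j) = 0 := by
        apply Finset.sum_eq_zero
        intro j hj
        rw [Finset.mem_Ico] at hj
        have hm1 : b*(d₀+1) ≤ b*j := Nat.mul_le_mul_left b hj.1
        have he : b*(d₀+1) = b*d₀ + b := by ring
        have h0 : d - b*j = 0 := by omega
        rw [h0, gfun_zero]
      have hlast : d - b*d₀ = r₀ := by omega
      have hmain : ∀ j ∈ range d₀, gfun q (d - b*j) = d - b*j + 1 := by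
        intro j hj
        rw [mem_range] at hj
        have hj1 : b*(j+1) ≤ b*d₀ := Nat.mul_le_mul_left b (by omega)
        have he : b*(j+1) = b*j + b := by ring
        exact gfun_small q _ (by omega) (by omega) (by omega)
      have e1 : ∑ j ∈ range (d₀+1), gfun q (d - b*j)
          = ∑ j ∈ range d₀, gfun q (d - b*j) + gfun q (d - b*d₀) :=
        Finset.sum_range_succ _ _
      have e2 : ∑ j ∈ range (d₀+1), (d - b*j + 1)
          = ∑ j ∈ range d₀, (d - b*j + 1) + (d - b*d₀ + 1) :=
        Finset.sum_range_succ _ _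
      have e3 : ∑ j ∈ range d₀, gfun q (d - b*j) = ∑ j ∈ range d₀, (d - b*j + 1) :=
        Finset.sum_congr rfl hmain
      have hdvd_iff := dvd_iff_r0 b d d₀ r₀ hb hd hr
      rw [Hcount, hsplit, hzero]
      rcases Nat.eq_zero_or_pos r₀ with h0 | h0
      · rw [if_pos (hdvd_iff.mpr h0), e1, e2, e3, hlast, h0, gfun_zero]
        omega
      · rw [if_neg (fun hh => h0.ne' (hdvd_iff.mp hh)), e1, e2, e3, hlast,
          gfun_small q r₀ h0 (by omega) (by omega)]
        omega
    rw [keyN, Nat.cast_sum]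
    apply Finset.sum_congr rfl
    intro j hj
    rw [mem_range] at hj
    have hj1 : b*j ≤ b*d₀ := Nat.mul_le_mul_left b (by omega)
    have hle : b*j ≤ d := by omega
    push_cast [Nat.cast_sub hle]
    ring
  have htrap := sum_trapezoid ((d:ℤ)+1) (b:ℤ) (d₀+1)
  obtain ⟨c, hc⟩ := Int.even_mul_succ_self (d₀:ℤ)
  have hX : ((d₀:ℤ)*((d₀:ℤ)+1))/2 = c := by omega
  rw [key, hX]
  have h2' : 2 * ∑ j ∈ range (d₀+1), ((d:ℤ) + 1 - (b:ℤ)*(j:ℤ))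
      = 2 * (((d₀:ℤ)+1)*((d:ℤ)+1) - (b:ℤ)*c) := by
    rw [htrap]
    push_cast
    linear_combination (-(b:ℤ))*hc
  linarith

lemma hc3 (q b d d₀ r₀ k r : ℕ) (hq2 : 2 ≤ q) (hb : 0 < b) (hbq : b < q)
    (hd : d = d₀*b + r₀) (hr : r₀ < b) (hdk : d = q + k*b + r) (hrb : r < b)
    (h1 : q+1 ≤ d) (h2 : d ≤ q*b) :
    (Hcount q b d : ℤ) = ((k:ℤ)+1)*((q:ℤ)+1) + ((d₀:ℤ)-(k:ℤ))*((d:ℤ)+1)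
      - (b:ℤ)*((((d₀:ℤ)*((d₀:ℤ)+1)) - (k:ℤ)*((k:ℤ)+1))/2) := by
  have hd' : d = b*d₀ + r₀ := by rw [hd]; ring
  have hdk' : d = q + b*k + r := by rw [hdk]; ring
  have hqb : q*b = b*q := by ring
  have hkq : k < q := by
    by_contra h
    push_neg at h
    have : b*q ≤ b*k := Nat.mul_le_mul_left b h
    omega
  have hkd₀ : k < d₀ := by
    have hbk : b*k + 2 ≤ b*d₀ := by omega
    exact Nat.lt_of_mul_lt_mul_left (a := b) (by omega)
  have hdvd_iff := dvd_iff_r0 b d d₀ r₀ hb hd hr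
  have hlow : ∑ j ∈ range (k+1), gfun q (d - b*j) = (k+1)*(q+1) := by
    rw [Finset.sum_congr rfl (fun j hj => ?_), Finset.sum_const, card_range, smul_eq_mul]
    rw [mem_range] at hj
    have : b*j ≤ b*k := Nat.mul_le_mul_left b (by omega)
    exact gfun_big q _ (by omega) (by omega)
  have keyN : Hcount q b d = (k+1)*(q+1) + ∑ j ∈ Ico (k+1) (d₀+1), (d - b*j + 1) := by
    have hsplit1 : ∑ j ∈ range q, gfun q (d - b*j)
        = ∑ j ∈ range (k+1), gfun q (d - b*j) + ∑ j ∈ Ico (k+1) q, gfun q (d - b*j) :=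
      (Finset.sum_range_add_sum_Ico _ (by omega)).symm
    rcases le_or_gt (d₀ + 1) q with hA | hB
    · have hsplit2 : ∑ j ∈ Ico (k+1) q, gfun q (d - b*j)
          = ∑ j ∈ Ico (k+1) (d₀+1), gfun q (d - b*j)
            + ∑ j ∈ Ico (d₀+1) q, gfun q (d - b*j) :=
        (Finset.sum_Ico_consecutive _ (by omega) hA).symm
      have hzero : ∑ j ∈ Ico (d₀+1) q, gfun q (d - b*j) = 0 := by
        apply Finset.sum_eq_zero
        intro j hj
        rw [Finset.mem_Ico] at hj
        have hm1 : b*(d₀+1) ≤ b*j := Nat.mul_le_mul_left b hj.1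
        have he : b*(d₀+1) = b*d₀ + b := by ring
        have h0 : d - b*j = 0 := by omega
        rw [h0, gfun_zero]
      have hmid : ∀ j ∈ Ico (k+1) d₀, gfun q (d - b*j) = d - b*j + 1 := by
        intro j hj
        rw [Finset.mem_Ico] at hj
        have hm1 : b*(j+1) ≤ b*d₀ := Nat.mul_le_mul_left b (by omega)
        have he1 : b*(j+1) = b*j + b := by ring
        have hm2 : b*(k+1) ≤ b*j := Nat.mul_le_mul_left b (by omega)
        have he2 : b*(k+1) = b*k + b := by ring
        exact gfun_small q _ (by omega) (by omega) (by omega)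
      have e1 : ∑ j ∈ Ico (k+1) (d₀+1), gfun q (d - b*j)
          = ∑ j ∈ Ico (k+1) d₀, gfun q (d - b*j) + gfun q (d - b*d₀) :=
        Finset.sum_Ico_succ_top (by omega) _
      have e2 : ∑ j ∈ Ico (k+1) (d₀+1), (d - b*j + 1)
          = ∑ j ∈ Ico (k+1) d₀, (d - b*j + 1) + (d - b*d₀ + 1) :=
        Finset.sum_Ico_succ_top (by omega) _
      have e3 : ∑ j ∈ Ico (k+1) d₀, gfun q (d - b*j) = ∑ j ∈ Ico (k+1) d₀, (d - b*j + 1) :=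
        Finset.sum_congr rfl hmid
      have hlast : d - b*d₀ = r₀ := by omega
      rw [Hcount, hsplit1, hsplit2, hzero, hlow]
      rcases Nat.eq_zero_or_pos r₀ with h0 | h0
      · rw [if_pos (hdvd_iff.mpr h0), e1, e2, e3, hlast, h0, gfun_zero]
        omega
      · rw [if_neg (fun hh => h0.ne' (hdvd_iff.mp hh)), e1, e2, e3, hlast,
          gfun_small q r₀ h0 (by omega) (by omega)]
        omega
    · -- d₀ ≥ q : d = q*b, d₀ = q, r₀ = 0
      have h5 : b*q ≤ b*d₀ := Nat.mul_le_mul_left b (by omega)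
      have hr₀0 : r₀ = 0 := by omega
      have h6 : b*d₀ ≤ b*q := by omega
      have hd₀q : d₀ = q := le_antisymm (Nat.le_of_mul_le_mul_left (by omega) hb) (by omega)
      have hmid : ∀ j ∈ Ico (k+1) q, gfun q (d - b*j) = d - b*j + 1 := by
        intro j hj
        rw [Finset.mem_Ico] at hj
        have hm1 : b*(j+1) ≤ b*q := Nat.mul_le_mul_left b (by omega)
        have he1 : b*(j+1) = b*j + b := by ring
        have hm2 : b*(k+1) ≤ b*j := Nat.mul_le_mul_left b (by omega)
        have he2 : b*(k+1) = b*k + b := by ring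
        exact gfun_small q _ (by omega) (by omega) (by omega)
      have e2' : ∑ j ∈ Ico (k+1) (q+1), (d - b*j + 1)
          = ∑ j ∈ Ico (k+1) q, (d - b*j + 1) + (d - b*q + 1) :=
        Finset.sum_Ico_succ_top (by omega) _
      have e3 : ∑ j ∈ Ico (k+1) q, gfun q (d - b*j)
          = ∑ j ∈ Ico (k+1) q, (d - b*j + 1) :=
        Finset.sum_congr rfl hmid
      have hlastq : d - b*q = 0 := by omega
      rw [Hcount, if_pos (hdvd_iff.mpr hr₀0), hd₀q]
      omega
  -- cast to ℤ
  have key : (Hcount q b d : ℤ)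
      = ((k:ℤ)+1)*((q:ℤ)+1) + ∑ j ∈ Ico (k+1) (d₀+1), ((d:ℤ) + 1 - (b:ℤ)*(j:ℤ)) := by
    rw [keyN]
    push_cast
    congr 1
    apply Finset.sum_congr rfl
    intro j hj
    rw [Finset.mem_Ico] at hj
    have hj1 : b*j ≤ b*d₀ := Nat.mul_le_mul_left b (by omega)
    have hle : b*j ≤ d := by omega
    rw [Nat.cast_sub hle]
    push_cast
    ring
  have htrap1 := sum_trapezoid ((d:ℤ)+1) (b:ℤ) (d₀+1)
  have htrap2 := sum_trapezoid ((d:ℤ)+1) (b:ℤ) (k+1)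
  obtain ⟨c1, hc1⟩ := Int.even_mul_succ_self (d₀:ℤ)
  obtain ⟨c2, hc2⟩ := Int.even_mul_succ_self (k:ℤ)
  have hX : (((d₀:ℤ)*((d₀:ℤ)+1)) - (k:ℤ)*((k:ℤ)+1))/2 = c1 - c2 := by omega
  have hIsub : ∑ j ∈ Ico (k+1) (d₀+1), ((d:ℤ) + 1 - (b:ℤ)*(j:ℤ))
      = ∑ j ∈ range (d₀+1), ((d:ℤ) + 1 - (b:ℤ)*(j:ℤ))
        - ∑ j ∈ range (k+1), ((d:ℤ) + 1 - (b:ℤ)*(j:ℤ)) :=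
    Finset.sum_Ico_eq_sub _ (by omega)
  have h2' : 2 * ∑ j ∈ Ico (k+1) (d₀+1), ((d:ℤ) + 1 - (b:ℤ)*(j:ℤ))
      = 2 * (((d₀:ℤ)-(k:ℤ))*((d:ℤ)+1) - (b:ℤ)*(c1 - c2)) := by
    rw [hIsub, mul_sub, htrap1, htrap2]
    push_cast
    linear_combination (-(b:ℤ))*hc1 + (b:ℤ)*hc2
  rw [key, hX]
  linarith

lemma hc4 (q b d d₀ r₀ k r : ℕ) (hq2 : 2 ≤ q) (hb : 0 < b) (hbq : b < q)
    (hd : d = d₀*b + r₀) (hr : r₀ < b) (hdk : d = q + k*b + r) (hrb : r < b)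
    (h1 : q*b < d) (hk : k < q) :
    (Hcount q b d : ℤ) = (b:ℤ)*((((k:ℤ)+(q:ℤ))*((k:ℤ)-(q:ℤ)+1))/2)
      + (q:ℤ)*((k:ℤ)+(d:ℤ)+1) - (d:ℤ)*(k:ℤ) - (b:ℤ)*(d₀:ℤ)
      + ((q:ℤ) - (r₀:ℤ) + (if r₀ = 0 then (1:ℤ) else 0)) := by
  have hd' : d = b*d₀ + r₀ := by rw [hd]; ring
  have hdk' : d = q + b*k + r := by rw [hdk]; ring
  have hqb : q*b = b*q := by ring
  have hdvd_iff := dvd_iff_r0 b d d₀ r₀ hb hd hr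
  have hlow : ∑ j ∈ range (k+1), gfun q (d - b*j) = (k+1)*(q+1) := by
    rw [Finset.sum_congr rfl (fun j hj => ?_), Finset.sum_const, card_range, smul_eq_mul]
    rw [mem_range] at hj
    have : b*j ≤ b*k := Nat.mul_le_mul_left b (by omega)
    exact gfun_big q _ (by omega) (by omega)
  have hmid : ∀ j ∈ Ico (k+1) q, gfun q (d - b*j) = d - b*j + 1 := by
    intro j hj
    rw [Finset.mem_Ico] at hj
    have hm1 : b*(j+1) ≤ b*q := Nat.mul_le_mul_left b (by omega)
    have he1 : b*(j+1) = b*j + b := by ring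
    have hm2 : b*(k+1) ≤ b*j := Nat.mul_le_mul_left b (by omega)
    have he2 : b*(k+1) = b*k + b := by ring
    exact gfun_small q _ (by omega) (by omega) (by omega)
  have keyN : Hcount q b d = (if b ∣ d then 1 else 0) + (k+1)*(q+1)
      + ∑ j ∈ Ico (k+1) q, (d - b*j + 1) := by
    have hsplit1 : ∑ j ∈ range q, gfun q (d - b*j)
        = ∑ j ∈ range (k+1), gfun q (d - b*j) + ∑ j ∈ Ico (k+1) q, gfun q (d - b*j) :=
      (Finset.sum_range_add_sum_Ico _ (by omega)).symm
    rw [Hcount, hsplit1, hlow, Finset.sum_congr rfl hmid, Nat.add_assoc]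
  have key : (Hcount q b d : ℤ) = (if r₀ = 0 then (1:ℤ) else 0) + ((k:ℤ)+1)*((q:ℤ)+1)
      + ∑ j ∈ Ico (k+1) q, ((d:ℤ) + 1 - (b:ℤ)*(j:ℤ)) := by
    rw [keyN]
    push_cast
    have hind : (if b ∣ d then (1:ℤ) else 0) = (if r₀ = 0 then (1:ℤ) else 0) := by
      rcases Nat.eq_zero_or_pos r₀ with h0 | h0
      · rw [if_pos (hdvd_iff.mpr h0), if_pos h0]
      · rw [if_neg (fun hh => h0.ne' (hdvd_iff.mp hh)), if_neg h0.ne']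
    rw [hind]
    congr 1
    apply Finset.sum_congr rfl
    intro j hj
    rw [Finset.mem_Ico] at hj
    have hj1 : b*j ≤ b*q := Nat.mul_le_mul_left b (by omega)
    have hle : b*j ≤ d := by omega
    rw [Nat.cast_sub hle]
    push_cast
    ring
  have htrap1 := sum_trapezoid ((d:ℤ)+1) (b:ℤ) q
  have htrap2 := sum_trapezoid ((d:ℤ)+1) (b:ℤ) (k+1)
  obtain ⟨c, hc⟩ : ∃ c : ℤ, ((k:ℤ)+(q:ℤ))*((k:ℤ)-(q:ℤ)+1) = c + c := by
    rcases Int.even_or_odd ((k:ℤ)+(q:ℤ)) with he | ho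
    · obtain ⟨c0, hc0⟩ := he
      exact ⟨c0*((k:ℤ)-(q:ℤ)+1), by rw [hc0]; ring⟩
    · obtain ⟨c0, hc0⟩ := ho
      exact ⟨((k:ℤ)+(q:ℤ))*(c0+1-(q:ℤ)), by linear_combination ((k:ℤ)+(q:ℤ))*hc0⟩
  have hX : (((k:ℤ)+(q:ℤ))*((k:ℤ)-(q:ℤ)+1))/2 = c := by omega
  have hdZ : (d:ℤ) = (b:ℤ)*(d₀:ℤ) + (r₀:ℤ) := by rw [hd]; push_cast; ring
  have hIsub : ∑ j ∈ Ico (k+1) q, ((d:ℤ) + 1 - (b:ℤ)*(j:ℤ))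
      = ∑ j ∈ range q, ((d:ℤ) + 1 - (b:ℤ)*(j:ℤ))
        - ∑ j ∈ range (k+1), ((d:ℤ) + 1 - (b:ℤ)*(j:ℤ)) :=
    Finset.sum_Ico_eq_sub _ (by omega)
  have h3 : 2 * (Hcount q b d : ℤ) = 2 * ((b:ℤ)*c
      + (q:ℤ)*((k:ℤ)+(d:ℤ)+1) - (d:ℤ)*(k:ℤ) - (b:ℤ)*(d₀:ℤ)
      + ((q:ℤ) - (r₀:ℤ) + (if r₀ = 0 then (1:ℤ) else 0))) := by
    rw [key, mul_add, mul_add, hIsub, mul_sub, htrap1, htrap2]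
    push_cast
    linear_combination (b:ℤ)*hc - 2*hdZ
  rw [hX]
  linarith

lemma hc5 (q b d d₀ r₀ k r : ℕ) (hq2 : 2 ≤ q) (hb : 0 < b) (hbq : b < q)
    (hd : d = d₀*b + r₀) (hr : r₀ < b) (hdk : d = q + k*b + r) (hrb : r < b)
    (h1 : q*b < d) (hk : q ≤ k) :
    (Hcount q b d : ℤ) = (q:ℤ)*((q:ℤ)+1) + (if r₀ = 0 then (1:ℤ) else 0) := by
  have hdk' : d = q + b*k + r := by rw [hdk]; ring
  have hdvd_iff := dvd_iff_r0 b d d₀ r₀ hb hd hr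
  have hsum : ∑ j ∈ range q, gfun q (d - b*j) = q*(q+1) := by
    rw [Finset.sum_congr rfl (fun j hj => ?_), Finset.sum_const, card_range, smul_eq_mul]
    rw [mem_range] at hj
    have hm1 : b*(j+1) ≤ b*k := Nat.mul_le_mul_left b (by omega)
    have he1 : b*(j+1) = b*j + b := by ring
    exact gfun_big q _ (by omega) (by omega)
  rw [Hcount, hsum]
  rcases Nat.eq_zero_or_pos r₀ with h0 | h0
  · rw [if_pos (hdvd_iff.mpr h0), if_pos h0]
    push_cast
    ring
  · rw [if_neg (fun hh => h0.ne' (hdvd_iff.mp hh)), if_neg h0.ne']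
    push_cast
    ring


/-! ### extra small lemmas -/

lemma Efin_zero (b : ℕ) (hb : 0 < b) : Efin b 0 = {((0:ℕ),(0:ℕ),(0:ℕ))} := by
  ext m
  rw [mem_Efin b 0 hb, Finset.mem_singleton]
  constructor
  · intro h
    have h1 : m.1 = 0 ∧ m.2.1 = 0 ∧ b * m.2.2 = 0 := by omega
    have h2 : m.2.2 = 0 := by
      rcases Nat.mul_eq_zero.mp h1.2.2 with h | h
      · omega
      · exact h
    rcases m with ⟨m1, m2, m3⟩
    simp_all
  · rintro rfl; rfl

lemma RF_zero_card (q b : ℕ) (hb : 0 < b) : (RF q b 0).card = 1 := by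
  have hR : RF q b 0 = {((0:ℕ),(0:ℕ),(0:ℕ))} := by
    rw [RF, Efin_zero b hb]
    rfl
  rw [hR, Finset.card_singleton]

/-! ### the main theorem -/

/-- Theorem (Hilbert function of `ℙ(1,1,b)(F_q)` when `q > b`): writing `d = d₀b + r₀`
with `0 ≤ r₀ < b`, and `d = q + kb + r` with `0 ≤ r < b` when `d > q`, and with
`κ = q − r₀` if `0 < r₀ < b`, `κ = q + 1` if `r₀ = 0`, the five stated case formulas
hold. -/
theorem hilbert_function_P11b_of_q_gt_b (q : ℕ) (hq : q = Fintype.card F)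
    (b : ℕ) (hb : 0 < b) (hbq : b < q) (d d₀ r₀ : ℕ)
    (hd : d = d₀ * b + r₀) (hr₀ : r₀ < b) (κ : ℤ)
    (hκ : κ = if r₀ = 0 then (q : ℤ) + 1 else (q : ℤ) - (r₀ : ℤ)) :
    (d ≤ b - 1 → (HY F b d : ℤ) = (d : ℤ) + 1) ∧
    (b ≤ d → d ≤ q →
      (HY F b d : ℤ) = ((d₀ : ℤ) + 1) * ((d : ℤ) + 1)
        - (b : ℤ) * ((d₀ : ℤ) * ((d₀ : ℤ) + 1) / 2)) ∧
    (∀ k r : ℕ, d = q + k * b + r → r < b → q + 1 ≤ d → d ≤ q * b →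
      (HY F b d : ℤ) = ((k : ℤ) + 1) * ((q : ℤ) + 1)
        + ((d₀ : ℤ) - (k : ℤ)) * ((d : ℤ) + 1)
        - (b : ℤ) * (((d₀ : ℤ) * ((d₀ : ℤ) + 1) - (k : ℤ) * ((k : ℤ) + 1)) / 2)) ∧
    (∀ k r : ℕ, d = q + k * b + r → r < b → q * b < d → k < q →
      (HY F b d : ℤ) = (b : ℤ) * (((k : ℤ) + (q : ℤ)) * ((k : ℤ) - (q : ℤ) + 1) / 2)
        + (q : ℤ) * ((k : ℤ) + (d : ℤ) + 1) - (d : ℤ) * (k : ℤ) - (b : ℤ) * (d₀ : ℤ)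
        + κ) ∧
    (∀ k r : ℕ, d = q + k * b + r → r < b → q * b < d → q ≤ k →
      (HY F b d : ℤ) = (q : ℤ) ^ 2 + (r₀ : ℤ) + κ) := by
  have hq2 : 2 ≤ q := by omega
  have hcard : HY F b d = (RF q b d).card := by
    rw [hq]
    exact HY_eq_card F b d hb
  have hmain : 1 ≤ d → (HY F b d : ℤ) = (Hcount q b d : ℤ) := by
    intro hd1
    rw [hcard, card_RF_eq q b d hq2 hb hbq hd1]
    rfl
  have hκ' : κ = (q:ℤ) - (r₀:ℤ) + (if r₀ = 0 then (1:ℤ) else 0) := by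
    rw [hκ]
    rcases Nat.eq_zero_or_pos r₀ with h0 | h0
    · rw [if_pos h0, if_pos h0, h0]
      push_cast
      ring
    · rw [if_neg h0.ne', if_neg h0.ne']
      ring
  refine ⟨?_, ?_, ?_, ?_, ?_⟩
  · -- case 1
    intro h
    rcases Nat.eq_zero_or_pos d with rfl | hd1
    · rw [hcard, RF_zero_card q b hb]
      norm_num
    · rw [hmain hd1]
      exact hc1 q b d hq2 hbq hd1 h
  · -- case 2
    intro h1 h2
    rw [hmain (by omega)]
    exact hc2 q b d d₀ r₀ hq2 hb hbq hd hr₀ h1 h2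
  · -- case 3
    intro k r hdk hrb h1 h2
    rw [hmain (by omega)]
    exact hc3 q b d d₀ r₀ k r hq2 hb hbq hd hr₀ hdk hrb h1 h2
  · -- case 4
    intro k r hdk hrb h1 hk
    rw [hmain (by omega), hκ']
    exact hc4 q b d d₀ r₀ k r hq2 hb hbq hd hr₀ hdk hrb h1 hk
  · -- case 5
    intro k r hdk hrb h1 hk
    rw [hmain (by omega), hκ', hc5 q b d d₀ r₀ k r hq2 hb hbq hd hr₀ hdk hrb h1 hk]
    push_cast
    ring

end
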